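/- The set of fixed points of the wealth-update map f, {x ∈ ℝ | f(x) = x}, has at most 3 elements. -/

import Mathlib

open Real

set_option maxHeartbeats 1000000 in
private lemma gauss_hasDerivAt
    (Φ : ℝ → ℝ)
    (hΦ : ∀ u, Φ u = ∫ t in Set.Iic u, (Real.sqrt (2 * π))⁻¹ * Real.exp (-t ^ 2 / 2)) :
    ∀ u, HasDerivAt Φ ((Real.sqrt (2 * π))⁻¹ * Real.exp (-u ^ 2 / 2)) u := by
  set g : ℝ → ℝ := fun t => (Real.sqrt (2 * π))⁻¹ * Real.exp (-t ^ 2 / 2) with hg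
  have hint : MeasureTheory.Integrable g := by
    have h0 : MeasureTheory.Integrable (fun t : ℝ => Real.exp (-(1/2 : ℝ) * t ^ 2)) :=
      integrable_exp_neg_mul_sq (by norm_num)
    refine (h0.const_mul ((Real.sqrt (2 * π))⁻¹)).congr ?_
    filter_upwards with t
    rw [hg]; congr 1; ring
  have hcont : Continuous g := by
    apply Continuous.mul continuous_const
    exact Real.continuous_exp.comp (by continuity)
  intro u
  have hrepr : ∀ v : ℝ, Φ v = (∫ t in Set.Iic (0:ℝ), g t) + ∫ t in (0:ℝ)..v, g t := by
    intro v
    have := intervalIntegral.integral_Iic_sub_Iic (hint.integrableOn) (hint.integrableOn)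
      (a := (0:ℝ)) (b := v) (μ := MeasureTheory.volume)
    rw [hΦ v]
    have hΦv : (∫ t in Set.Iic v, (Real.sqrt (2 * π))⁻¹ * Real.exp (-t ^ 2 / 2))
        = ∫ t in Set.Iic v, g t := rfl
    rw [hΦv]
    linarith [this]
  have hD : HasDerivAt (fun v => (∫ t in Set.Iic (0:ℝ), g t) + ∫ t in (0:ℝ)..v, g t) (g u) u := by
    have := intervalIntegral.integral_hasDerivAt_right
      (f := g) (a := (0:ℝ)) (b := u)
      (hcont.intervalIntegrable 0 u)
      (hcont.stronglyMeasurable.stronglyMeasurableAtFilter)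
      hcont.continuousAt
    exact this.const_add _
  have : Φ = fun v => (∫ t in Set.Iic (0:ℝ), g t) + ∫ t in (0:ℝ)..v, g t := funext hrepr
  rw [this]
  exact hD

set_option maxHeartbeats 1000000 in
/-- the wealth-update map `f(x) = 1 - Φ(K(C - (1-α)x))` has at most three
fixed points. -/
theorem at_most_three_fixed_points
    (γ σ C α : ℝ) (hγ : 0 < γ) (hσ : 0 < σ) (hα : α ∈ Set.Ico (0 : ℝ) 1)
    (Φ : ℝ → ℝ)
    (hΦ : ∀ u, Φ u = ∫ t in Set.Iic u, (Real.sqrt (2 * π))⁻¹ * Real.exp (-t ^ 2 / 2))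
    (K : ℝ) (hK : K = Real.sqrt (γ ^ 2 + σ ^ 2) / (α * γ ^ 2 + (1 - α) * σ ^ 2))
    (f : ℝ → ℝ) (hf : f = fun x => 1 - Φ (K * (C - (1 - α) * x))) :
    ∃ s : Finset ℝ, s.card ≤ 3 ∧ ∀ x : ℝ, f x = x → x ∈ s := by
  obtain ⟨hα0, hα1⟩ := hα
  set β : ℝ := 1 - α with hβ
  have hβ0 : 0 < β := by simp [hβ]; linarith
  have hK0 : 0 < K := by
    rw [hK]
    apply div_pos
    · exact Real.sqrt_pos.mpr (by positivity)
    · have : 0 < (1 - α) * σ ^ 2 := by positivity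
      nlinarith [sq_nonneg γ, mul_nonneg hα0 (sq_nonneg γ)]
  set g : ℝ → ℝ := fun t => (Real.sqrt (2 * π))⁻¹ * Real.exp (-t ^ 2 / 2) with hgdef
  have hΦ' : ∀ u, HasDerivAt Φ (g u) u := gauss_hasDerivAt Φ hΦ
  -- the function F x = f x - x and its derivative
  set F : ℝ → ℝ := fun x => f x - x with hF
  have hF' : ∀ x, HasDerivAt F (K * β * g (K * (C - β * x)) - 1) x := by
    intro x
    have hinner : HasDerivAt (fun x : ℝ => K * (C - β * x)) (-(K * β)) x := by
      have h1 : HasDerivAt (fun x : ℝ => C - β * x) (-β) x := by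
        simpa using ((hasDerivAt_id x).const_mul β).const_sub C
      simpa [mul_comm, neg_mul] using h1.const_mul K
    have hcomp : HasDerivAt (fun x => Φ (K * (C - β * x))) (g (K * (C - β * x)) * -(K * β)) x :=
      (hΦ' (K * (C - β * x))).comp x hinner
    have hfx : HasDerivAt f (-(g (K * (C - β * x)) * -(K * β))) x := by
      rw [hf]
      exact hcomp.const_sub 1
    have := hfx.sub (hasDerivAt_id x)
    have e : K * β * g (K * (C - β * x)) - 1 = -(g (K * (C - β * x)) * -(K * β)) - 1 := by ring
    rw [e]; exact this
  -- Rolle's consequence: between two fixed points, derivative vanishes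
  have key : ∀ a b : ℝ, a < b → f a = a → f b = b →
      ∃ c ∈ Set.Ioo a b, K * β * g (K * (C - β * c)) = 1 := by
    intro a b hab ha hb
    have hFa : F a = 0 := by simp [hF, ha]
    have hFb : F b = 0 := by simp [hF, hb]
    obtain ⟨c, hc, hc0⟩ := exists_hasDerivAt_eq_zero hab
      (fun x _ => (hF' x).continuousAt.continuousWithinAt)
      (by rw [hFa, hFb]) (fun x _ => hF' x)
    exact ⟨c, hc, by linarith⟩
  -- level sets of the gaussian: if g y1 = g y2 then y1^2 = y2^2
  have gsq : ∀ y1 y2 : ℝ, g y1 = g y2 → y1 ^ 2 = y2 ^ 2 := by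
    intro y1 y2 h
    have hpos : (0:ℝ) < (Real.sqrt (2 * π))⁻¹ := by
      have : 0 < Real.sqrt (2 * π) := Real.sqrt_pos.mpr (by positivity)
      positivity
    have hexp : Real.exp (-y1 ^ 2 / 2) = Real.exp (-y2 ^ 2 / 2) := by
      have := mul_left_cancel₀ (ne_of_gt hpos) h
      exact this
    have := Real.exp_injective hexp
    linarith
  -- no four distinct fixed points
  have main : ∀ x1 x2 x3 x4 : ℝ, x1 < x2 → x2 < x3 → x3 < x4 →
      f x1 = x1 → f x2 = x2 → f x3 = x3 → f x4 = x4 → False := by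
    intro x1 x2 x3 x4 h12 h23 h34 hf1 hf2 hf3 hf4
    obtain ⟨c1, hc1, hv1⟩ := key x1 x2 h12 hf1 hf2
    obtain ⟨c2, hc2, hv2⟩ := key x2 x3 h23 hf2 hf3
    obtain ⟨c3, hc3, hv3⟩ := key x3 x4 h34 hf3 hf4
    have hcc1 : c1 < c2 := lt_trans hc1.2 hc2.1
    have hcc2 : c2 < c3 := lt_trans hc2.2 hc3.1
    set y1 := K * (C - β * c1) with hy1
    set y2 := K * (C - β * c2) with hy2
    set y3 := K * (C - β * c3) with hy3
    have hKβ : K * β ≠ 0 := by positivity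
    have hg12 : g y1 = g y2 := mul_left_cancel₀ hKβ (by rw [hv1, hv2])
    have hg13 : g y1 = g y3 := mul_left_cancel₀ hKβ (by rw [hv1, hv3])
    have hsq12 : y1 ^ 2 = y2 ^ 2 := gsq _ _ hg12
    have hsq13 : y1 ^ 2 = y3 ^ 2 := gsq _ _ hg13
    have hinj : ∀ u v : ℝ, K * (C - β * u) = K * (C - β * v) → u = v := by
      intro u v h
      have h1 : C - β * u = C - β * v := mul_left_cancel₀ (ne_of_gt hK0) h
      have h2 : β * u = β * v := by linarith
      exact mul_left_cancel₀ (ne_of_gt hβ0) h2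
    have hy12 : y1 ≠ y2 := fun h => (ne_of_lt hcc1) (hinj c1 c2 h)
    have hy13 : y1 ≠ y3 := fun h => (ne_of_lt (lt_trans hcc1 hcc2)) (hinj c1 c3 h)
    have hy23 : y2 ≠ y3 := fun h => (ne_of_lt hcc2) (hinj c2 c3 h)
    -- y1^2 = y2^2, y1 ≠ y2 ⇒ y1 = -y2; similarly y1 = -y3 ⇒ y2 = y3, contradiction
    have e12 : y1 = -y2 := by
      have := sq_eq_sq_iff_eq_or_eq_neg.mp hsq12
      rcases this with h | h
      · exact absurd h hy12
      · exact h
    have e13 : y1 = -y3 := by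
      rcases sq_eq_sq_iff_eq_or_eq_neg.mp hsq13 with h | h
      · exact absurd h hy13
      · exact h
    exact hy23 (by linarith)
  -- conclude: by contradiction, build 4 distinct fixed points
  by_contra hcon
  push_neg at hcon
  obtain ⟨a1, ha1, _⟩ := hcon ∅ (by simp)
  obtain ⟨a2, ha2, hm2⟩ := hcon {a1} (by simp)
  have card2 : ∀ a b : ℝ, ({a, b} : Finset ℝ).card ≤ 2 :=
    fun a b => le_trans (Finset.card_insert_le _ _) (by simp)
  have card3 : ∀ a b c : ℝ, ({a, b, c} : Finset ℝ).card ≤ 3 :=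
    fun a b c => le_trans (Finset.card_insert_le _ _) (by have := card2 b c; omega)
  obtain ⟨a3, ha3, hm3⟩ := hcon {a1, a2} (le_trans (card2 a1 a2) (by norm_num))
  obtain ⟨a4, ha4, hm4⟩ := hcon {a1, a2, a3} (card3 a1 a2 a3)
  simp at hm2 hm3 hm4
  obtain ⟨n12, n13, n14, n23, n24, n34⟩ :
      a1 ≠ a2 ∧ a1 ≠ a3 ∧ a1 ≠ a4 ∧ a2 ≠ a3 ∧ a2 ≠ a4 ∧ a3 ≠ a4 := by
    refine ⟨?_, ?_, ?_, ?_, ?_, ?_⟩ <;> intro h <;> subst h <;> tauto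
  -- sort the four points
  classical
  set s : Finset ℝ := {a1, a2, a3, a4} with hs
  have hcard : s.card = 4 := by
    rw [hs]
    rw [Finset.card_insert_of_notMem (by simp [n12, n13, n14]),
        Finset.card_insert_of_notMem (by simp [n23, n24]),
        Finset.card_insert_of_notMem (by simp [n34])]
    simp
  have hfix : ∀ x ∈ s, f x = x := by
    intro x hx
    rw [hs] at hx
    simp at hx
    rcases hx with h | h | h | h <;> subst h <;> assumption
  have hlen : (s.sort (· ≤ ·)).length = 4 := by rw [Finset.length_sort, hcard]
  have hsorted : (s.sort (· ≤ ·)).Pairwise (· < ·) := List.sortedLT_iff_pairwise.mp s.sortedLT_sort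
  have hmem : ∀ x ∈ (s.sort (· ≤ ·)), f x = x :=
    fun x hx => hfix x ((Finset.mem_sort _).mp hx)
  have hex : ∃ b1 b2 b3 b4 : ℝ, s.sort (· ≤ ·) = [b1, b2, b3, b4] := by
    match s.sort (· ≤ ·), hlen with
    | [b1, b2, b3, b4], _ => exact ⟨b1, b2, b3, b4, rfl⟩
  obtain ⟨b1, b2, b3, b4, hl4⟩ := hex
  rw [hl4] at hsorted hmem
  simp [List.pairwise_cons] at hsorted
  exact main b1 b2 b3 b4 hsorted.1.1 hsorted.2.1.1 hsorted.2.2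
    (hmem b1 (by simp)) (hmem b2 (by simp)) (hmem b3 (by simp)) (hmem b4 (by simp))
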